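/- Let p be an odd prime dividing a such that the Legendre symbol of -bc modulo p equals -1, and let n be an integer such that the Legendre symbol of (a/p)·n modulo p equals -1 (where a/p denotes the integer quotient of a by p). Then the integer n·p is not represented over the rationals by the form ax² + by² + cz²; that is, there are no rational numbers x, y, z with ax² + by² + cz² = n·p. -/

import Mathlib

section aux

variable {F : Type*} [Field F]

lemma aux1 {b c y z : F} (hbc : ¬ IsSquare (-(b * c))) (h : b * y ^ 2 + c * z ^ 2 = 0) :
    y = 0 ∧ z = 0 := by
  have hb : b ≠ 0 := by rintro rfl; exact hbc (by simp)
  have hc : c ≠ 0 := by rintro rfl; exact hbc (by simp)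
  have hz : z = 0 := by
    by_contra hz
    exact hbc ⟨b * y / z, by field_simp; linear_combination (-1) * h⟩
  refine ⟨?_, hz⟩
  subst hz
  have : b * y ^ 2 = 0 := by linear_combination h
  rcases mul_eq_zero.1 this with h' | h'
  · exact absurd h' hb
  · exact pow_eq_zero_iff (n := 2) (by norm_num) |>.1 h'

lemma aux2 {a' n X W : F} (han : ¬ IsSquare (a' * n)) (h : a' * X ^ 2 = n * W ^ 2) :
    X = 0 ∧ W = 0 := by
  have ha' : a' ≠ 0 := by rintro rfl; exact han (by simp)
  have hn : n ≠ 0 := by rintro rfl; exact han (by simp)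
  have hW : W = 0 := by
    by_contra hW
    exact han ⟨a' * X / W, by field_simp; linear_combination (-1) * h⟩
  refine ⟨?_, hW⟩
  subst hW
  have : a' * X ^ 2 = 0 := by linear_combination h
  rcases mul_eq_zero.1 this with h' | h'
  · exact absurd h' ha'
  · exact pow_eq_zero_iff (n := 2) (by norm_num) |>.1 h'

end aux

lemma descent (a' b c n : ℤ) (p : ℕ) [hFp : Fact p.Prime]
    (hbc : ¬ IsSquare ((-(b * c) : ℤ) : ZMod p))
    (han : ¬ IsSquare ((a' * n : ℤ) : ZMod p)) :
    ∀ m : ℕ, ∀ W : ℤ, W.natAbs ≤ m → W ≠ 0 → ∀ X Y Z : ℤ,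
      (p : ℤ) * a' * X ^ 2 + b * Y ^ 2 + c * Z ^ 2 = n * (p : ℤ) * W ^ 2 → False := by
  have hp := hFp.out
  have hp0 : ((p : ℕ) : ℤ) ≠ 0 := by exact_mod_cast hp.ne_zero
  intro m
  induction m with
  | zero =>
      intro W hWm hW _ _ _ _
      exact hW (by omega)
  | succ m ih =>
      intro W hWm hW X Y Z heq
      -- reduce mod p : b Y² + c Z² ≡ 0
      have h1 : (b : ZMod p) * (Y : ZMod p) ^ 2 + (c : ZMod p) * (Z : ZMod p) ^ 2 = 0 := by
        have := congrArg (Int.cast : ℤ → ZMod p) heq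
        push_cast at this
        rw [ZMod.natCast_self] at this
        linear_combination this
      have hbc' : ¬ IsSquare (-((b : ZMod p) * (c : ZMod p))) := by
        intro h; apply hbc; push_cast; exact h
      obtain ⟨hY0, hZ0⟩ := aux1 hbc' h1
      obtain ⟨Y1, rfl⟩ : (p : ℤ) ∣ Y := (ZMod.intCast_zmod_eq_zero_iff_dvd _ _).1 hY0
      obtain ⟨Z1, rfl⟩ : (p : ℤ) ∣ Z := (ZMod.intCast_zmod_eq_zero_iff_dvd _ _).1 hZ0
      have heq2 : a' * X ^ 2 + (p : ℤ) * (b * Y1 ^ 2 + c * Z1 ^ 2) = n * W ^ 2 := by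
        apply mul_left_cancel₀ hp0
        linear_combination heq
      have h2 : (a' : ZMod p) * (X : ZMod p) ^ 2 = (n : ZMod p) * (W : ZMod p) ^ 2 := by
        have := congrArg (Int.cast : ℤ → ZMod p) heq2
        push_cast at this
        rw [ZMod.natCast_self] at this
        linear_combination this
      have han' : ¬ IsSquare ((a' : ZMod p) * (n : ZMod p)) := by
        intro h; apply han; push_cast; exact h
      obtain ⟨hX0, hW0⟩ := aux2 han' h2
      obtain ⟨X1, rfl⟩ : (p : ℤ) ∣ X := (ZMod.intCast_zmod_eq_zero_iff_dvd _ _).1 hX0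
      obtain ⟨W1, rfl⟩ : (p : ℤ) ∣ W := (ZMod.intCast_zmod_eq_zero_iff_dvd _ _).1 hW0
      have hW1 : W1 ≠ 0 := by rintro rfl; exact hW (by ring)
      have heq3 : (p : ℤ) * a' * X1 ^ 2 + b * Y1 ^ 2 + c * Z1 ^ 2 = n * (p : ℤ) * W1 ^ 2 := by
        apply mul_left_cancel₀ hp0
        linear_combination heq2
      have hlt : W1.natAbs ≤ m := by
        have h2p : 2 ≤ p := hp.two_le
        rw [Int.natAbs_mul, Int.natAbs_natCast] at hWm
        have hW1n : 1 ≤ W1.natAbs := Int.natAbs_pos.2 hW1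
        nlinarith [hWm, h2p, hW1n]
      exact ih W1 hlt hW1 X1 Y1 Z1 heq3

theorem stmt0 (a b c : ℤ) (ha : a ≠ 0) (hb : b ≠ 0) (hc : c ≠ 0)
    (hsa : Squarefree a) (hsb : Squarefree b) (hsc : Squarefree c)
    (hab : IsCoprime a b) (hac : IsCoprime a c) (hbc : IsCoprime b c)
    (p : ℕ) (hp : p.Prime) (hp2 : p ≠ 2) (hpa : (p : ℤ) ∣ a)
    (hleg1 : jacobiSym (-b * c) p = -1)
    (n : ℤ) (hleg2 : jacobiSym ((a / (p : ℤ)) * n) p = -1) :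
    ¬ ∃ x y z : ℚ, (a : ℚ) * x ^ 2 + (b : ℚ) * y ^ 2 + (c : ℚ) * z ^ 2 = ((n * p : ℤ) : ℚ) := by
  haveI : Fact p.Prime := ⟨hp⟩
  rw [← jacobiSym.legendreSym.to_jacobiSym] at hleg1 hleg2
  have hbc' : ¬ IsSquare ((-(b * c) : ℤ) : ZMod p) := by
    have := (legendreSym.eq_neg_one_iff p).1 hleg1
    convert this using 2
    push_cast; ring
  set a' : ℤ := a / (p : ℤ) with ha'def
  have ha' : a = (p : ℤ) * a' := (Int.mul_ediv_cancel' hpa).symm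
  have han' : ¬ IsSquare ((a' * n : ℤ) : ZMod p) := (legendreSym.eq_neg_one_iff p).1 hleg2
  rintro ⟨x, y, z, heq⟩
  set X : ℤ := x.num * ((y.den : ℤ) * (z.den : ℤ)) with hXdef
  set Y : ℤ := y.num * ((x.den : ℤ) * (z.den : ℤ)) with hYdef
  set Z : ℤ := z.num * ((x.den : ℤ) * (y.den : ℤ)) with hZdef
  set W : ℤ := (x.den : ℤ) * (y.den : ℤ) * (z.den : ℤ) with hWdef
  have hdx : ((x.den : ℤ) : ℚ) ≠ 0 := by exact_mod_cast x.den_ne_zero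
  have hdy : ((y.den : ℤ) : ℚ) ≠ 0 := by exact_mod_cast y.den_ne_zero
  have hdz : ((z.den : ℤ) : ℚ) ≠ 0 := by exact_mod_cast z.den_ne_zero
  have hW : W ≠ 0 := by
    simp only [hWdef]
    exact mul_ne_zero (mul_ne_zero (Int.natCast_ne_zero.2 x.den_ne_zero)
      (Int.natCast_ne_zero.2 y.den_ne_zero)) (Int.natCast_ne_zero.2 z.den_ne_zero)
  have hx : x * (x.den : ℚ) = (x.num : ℚ) := by
    conv_lhs => lhs; rw [← Rat.num_div_den x]
    exact div_mul_cancel₀ _ hdx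
  have hy : y * (y.den : ℚ) = (y.num : ℚ) := by
    conv_lhs => lhs; rw [← Rat.num_div_den y]
    exact div_mul_cancel₀ _ hdy
  have hz : z * (z.den : ℚ) = (z.num : ℚ) := by
    conv_lhs => lhs; rw [← Rat.num_div_den z]
    exact div_mul_cancel₀ _ hdz
  have heqZ : (p : ℤ) * a' * X ^ 2 + b * Y ^ 2 + c * Z ^ 2 = n * (p : ℤ) * W ^ 2 := by
    rw [← ha']
    have hq : ((a * X ^ 2 + b * Y ^ 2 + c * Z ^ 2 : ℤ) : ℚ) = ((n * (p : ℤ) * W ^ 2 : ℤ) : ℚ) := by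
      push_cast at heq ⊢
      simp only [hXdef, hYdef, hZdef, hWdef]
      push_cast
      linear_combination ((x.den : ℚ) * y.den * z.den) ^ 2 * heq
        - ((a : ℚ) * ((y.den : ℚ) * z.den) ^ 2 * ((x.num : ℚ) + x * x.den)) * hx
        - ((b : ℚ) * ((x.den : ℚ) * z.den) ^ 2 * ((y.num : ℚ) + y * y.den)) * hy
        - ((c : ℚ) * ((x.den : ℚ) * y.den) ^ 2 * ((z.num : ℚ) + z * z.den)) * hz
    exact_mod_cast hq
  exact descent a' b c n p hbc' han' W.natAbs W le_rfl hW X Y Z heqZ
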